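/- arXiv:1810.05956 — 3 statements merged into one kernel-verified Lean document; each statement's English description precedes it below -/
import Mathlib

section
/- Let C₀, κ > 0 and suppose φ ∈ C¹([0,∞)), ψ ∈ C⁰([0,∞)) satisfy |φ(r)| ≤ C₀ r ⟨r⟩^{-(κ+2)} and |φ'(r)| + |ψ(r)| ≤ C₀ ⟨r⟩^{-(κ+2)} for r ≥ 0. Let w be positive continuous with w(r) = 1/r for r ≥ r₀ and E₋ the associated kernel. Then for all t, r > 0: |∫_{|t-r|}^{t+r} E₋(t,r,y)(ψ(y) + φ'(y) + w(y)φ(y)) dy| ≲ C₀ r ⟨r⟩^{-2} ⟨t-r⟩^{-κ}. -/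
open MeasureTheory intervalIntegral Set Filter


noncomputable def ang (y : ℝ) : ℝ := Real.sqrt (1 + y^2)

lemma ang_pos (y : ℝ) : 0 < ang y := Real.sqrt_pos.2 (by positivity)

lemma one_le_ang (y : ℝ) : 1 ≤ ang y := by
  rw [show (1:ℝ) = Real.sqrt 1 by simp]
  exact Real.sqrt_le_sqrt (by nlinarith [sq_nonneg y])

lemma abs_le_ang (y : ℝ) : |y| ≤ ang y := by
  rw [show |y| = Real.sqrt (y^2) by rw [Real.sqrt_sq_eq_abs]]
  exact Real.sqrt_le_sqrt (by nlinarith)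

lemma ang_mono {a b : ℝ} (ha : 0 ≤ a) (hab : a ≤ b) : ang a ≤ ang b :=
  Real.sqrt_le_sqrt (by nlinarith)

lemma ang_le_sqrt2_mul {y : ℝ} (hy : 1 ≤ y) : ang y ≤ Real.sqrt 2 * y := by
  rw [show Real.sqrt 2 * y = Real.sqrt (2 * y^2) by
    rw [Real.sqrt_mul (by norm_num), Real.sqrt_sq (by linarith)]]
  exact Real.sqrt_le_sqrt (by nlinarith)

lemma ang_le_mul {u s : ℝ} (hu : 0 < u) (hus : u ≤ s) : ang s ≤ ang u * (s / u) := by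
  rw [show ang u * (s/u) = Real.sqrt ((1+u^2) * (s/u)^2) by
    rw [Real.sqrt_mul (by positivity), Real.sqrt_sq (div_nonneg (hu.le.trans hus) hu.le)]; rfl]
  apply Real.sqrt_le_sqrt
  rw [div_pow, ← mul_div_assoc, le_div_iff₀ (by positivity)]
  nlinarith

lemma ang_cont : Continuous ang :=
  Real.continuous_sqrt.comp (continuous_const.add (continuous_pow 2))

lemma ang_rpow_cont (c : ℝ) : Continuous (fun y => ang y ^ c) :=
  ang_cont.rpow_const (fun y => Or.inl (ne_of_gt (ang_pos y)))

lemma ang_rpow (y p : ℝ) : ang y ^ p = (1 + y^2) ^ (p/2) := by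
  rw [ang, Real.sqrt_eq_rpow, ← Real.rpow_mul (by positivity)]
  ring_nf

lemma ang_rpow_pos (y p : ℝ) : 0 < ang y ^ p := Real.rpow_pos_of_pos (ang_pos y) p

lemma ang_rpow_le_one {y p : ℝ} (hp : 0 ≤ p) : ang y ^ (-p) ≤ 1 := by
  rw [Real.rpow_neg (ang_pos y).le]
  exact inv_le_one_of_one_le₀ (Real.one_le_rpow (one_le_ang y) hp)

lemma ang_rpow_anti {a b p : ℝ} (ha : 0 ≤ a) (hab : a ≤ b) (hp : 0 ≤ p) :
    ang b ^ (-p) ≤ ang a ^ (-p) :=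
  Real.rpow_le_rpow_of_nonpos (ang_pos a) (ang_mono ha hab) (neg_nonpos.2 hp)

lemma hasDeriv_angpow (κ : ℝ) (hκ : 0 < κ) (y : ℝ) :
    HasDerivAt (fun y => -(Real.sqrt 2 / κ) * (1 + y^2) ^ (-κ/2))
      (Real.sqrt 2 * y * ang y ^ (-(κ+2))) y := by
  have h1 : HasDerivAt (fun y : ℝ => 1 + y^2) (2*y) y := by
    simpa using (hasDerivAt_pow 2 y).const_add 1
  have h2 : HasDerivAt (fun x : ℝ => x ^ (-κ/2 : ℝ)) ((-κ/2) * (1+y^2) ^ ((-κ/2) - 1)) (1+y^2) :=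
    Real.hasDerivAt_rpow_const (Or.inl (by positivity))
  have h3 := (h2.comp y h1).const_mul (-(Real.sqrt 2 / κ))
  refine h3.congr_deriv ?_
  rw [ang_rpow]
  rw [show (-κ/2 - 1 : ℝ) = -(κ+2)/2 by ring]
  field_simp

lemma ftc_angpow {κ a b : ℝ} (hκ : 0 < κ) (hab : a ≤ b) :
    ∫ y in a..b, Real.sqrt 2 * y * ang y ^ (-(κ+2)) =
      (Real.sqrt 2 / κ) * ((1+a^2) ^ (-κ/2) - (1+b^2) ^ (-κ/2)) := by
  have hcont : Continuous (fun y => Real.sqrt 2 * y * ang y ^ (-(κ+2))) :=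
    (continuous_const.mul continuous_id).mul (ang_rpow_cont _)
  rw [intervalIntegral.integral_eq_sub_of_hasDerivAt
    (fun y _ => hasDeriv_angpow κ hκ y) (hcont.intervalIntegrable _ _)]
  ring

lemma tail_bound {κ a b : ℝ} (hκ : 0 < κ) (ha : 1 ≤ a) (hab : a ≤ b) :
    ∫ y in a..b, ang y ^ (-(κ+1)) ≤ (Real.sqrt 2 / κ) * ang a ^ (-κ) := by
  have hmono : ∀ y ∈ Set.Icc a b, ang y ^ (-(κ+1)) ≤ Real.sqrt 2 * y * ang y ^ (-(κ+2)) := by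
    intro y hy
    have hy1 : 1 ≤ y := ha.trans hy.1
    have h1 : ang y ^ (-(κ+1)) = ang y * ang y ^ (-(κ+2)) := by
      rw [← Real.rpow_one_add' (ang_pos y).le (by intro h; nlinarith)]
      congr 1
      ring
    rw [h1]
    exact mul_le_mul_of_nonneg_right (ang_le_sqrt2_mul hy1) (ang_rpow_pos y _).le
  calc ∫ y in a..b, ang y ^ (-(κ+1))
      ≤ ∫ y in a..b, Real.sqrt 2 * y * ang y ^ (-(κ+2)) := by
        apply intervalIntegral.integral_mono_on hab
        · exact (ang_rpow_cont _).intervalIntegrable _ _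
        · exact (((continuous_const.mul continuous_id).mul
            (ang_rpow_cont _))).intervalIntegrable _ _
        · exact hmono
    _ = (Real.sqrt 2 / κ) * ((1+a^2) ^ (-κ/2) - (1+b^2) ^ (-κ/2)) := ftc_angpow hκ hab
    _ ≤ (Real.sqrt 2 / κ) * ang a ^ (-κ) := by
        rw [ang_rpow]
        have hb : (0:ℝ) < (1+b^2) ^ (-κ/2 : ℝ) := by positivity
        have : (0:ℝ) < Real.sqrt 2 / κ := by positivity
        rw [show (-κ/2 : ℝ) = -κ/2 by ring]
        nlinarith

lemma lemA (κ : ℝ) (hκ : 0 < κ) :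
    ∃ Cκ : ℝ, 0 < Cκ ∧ ∀ a b : ℝ, 0 ≤ a → a ≤ b →
      ∫ y in a..b, ang y ^ (-(κ+1)) ≤ Cκ * ang a ^ (-κ) := by
  refine ⟨(1 + Real.sqrt 2 / κ) * Real.sqrt 2 ^ κ, by positivity, ?_⟩
  intro a b ha hab
  have hs2 : (1:ℝ) ≤ Real.sqrt 2 := by
    rw [show (1:ℝ) = Real.sqrt 1 by simp]
    exact Real.sqrt_le_sqrt (by norm_num)
  have hs2κ : (1:ℝ) ≤ Real.sqrt 2 ^ κ := Real.one_le_rpow hs2 hκ.le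
  rcases le_total 1 a with h1 | h1
  · calc ∫ y in a..b, ang y ^ (-(κ+1)) ≤ (Real.sqrt 2 / κ) * ang a ^ (-κ) :=
        tail_bound hκ h1 hab
      _ ≤ (1 + Real.sqrt 2 / κ) * Real.sqrt 2 ^ κ * ang a ^ (-κ) := by
        have hpos := ang_rpow_pos a (-κ)
        have hc : Real.sqrt 2 / κ ≤ (1 + Real.sqrt 2 / κ) * Real.sqrt 2 ^ κ := by
          have h0 : (0:ℝ) < 1 + Real.sqrt 2 / κ := by positivity
          nlinarith
        exact mul_le_mul_of_nonneg_right hc hpos.le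
  · -- a ≤ 1
    have key : ∫ y in a..b, ang y ^ (-(κ+1)) ≤ 1 + Real.sqrt 2 / κ := by
      rcases le_total b 1 with hb | hb
      · calc ∫ y in a..b, ang y ^ (-(κ+1)) ≤ ∫ _ in a..b, (1:ℝ) := by
              refine intervalIntegral.integral_mono_on hab
                ((ang_rpow_cont _).intervalIntegrable _ _) intervalIntegrable_const
                (fun y _ => ang_rpow_le_one (by linarith))
          _ = b - a := by simp
          _ ≤ 1 + Real.sqrt 2 / κ := by
              have : (0:ℝ) < Real.sqrt 2 / κ := by positivity
              linarith
      · have hsplit : ∫ y in a..b, ang y ^ (-(κ+1)) =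
            (∫ y in a..(1:ℝ), ang y ^ (-(κ+1))) + ∫ y in (1:ℝ)..b, ang y ^ (-(κ+1)) :=
          (intervalIntegral.integral_add_adjacent_intervals
            ((ang_rpow_cont _).intervalIntegrable _ _)
            ((ang_rpow_cont _).intervalIntegrable _ _)).symm
        have hpart1 : ∫ y in a..(1:ℝ), ang y ^ (-(κ+1)) ≤ 1 := by
          calc ∫ y in a..(1:ℝ), ang y ^ (-(κ+1)) ≤ ∫ _ in a..(1:ℝ), (1:ℝ) := by
                refine intervalIntegral.integral_mono_on h1
                  ((ang_rpow_cont _).intervalIntegrable _ _) intervalIntegrable_const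
                  (fun y _ => ang_rpow_le_one (by linarith))
            _ = 1 - a := by simp
            _ ≤ 1 := by linarith
        have hpart2 : ∫ y in (1:ℝ)..b, ang y ^ (-(κ+1)) ≤ Real.sqrt 2 / κ := by
          calc ∫ y in (1:ℝ)..b, ang y ^ (-(κ+1)) ≤ (Real.sqrt 2 / κ) * ang 1 ^ (-κ) :=
              tail_bound hκ le_rfl hb
            _ ≤ (Real.sqrt 2 / κ) * 1 := by
              apply mul_le_mul_of_nonneg_left (ang_rpow_le_one hκ.le) (by positivity)
            _ = Real.sqrt 2 / κ := mul_one _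
        linarith [hsplit, hpart1, hpart2]
    have hinv : 1 ≤ Real.sqrt 2 ^ κ * ang a ^ (-κ) := by
      have hangle : ang a ≤ Real.sqrt 2 := by
        have h := ang_mono ha h1
        rw [show ang 1 = Real.sqrt 2 by rw [ang]; norm_num] at h
        exact h
      have h2 : Real.sqrt 2 ^ (-κ) ≤ ang a ^ (-κ) :=
        Real.rpow_le_rpow_of_nonpos (ang_pos a) hangle (neg_nonpos.2 hκ.le)
      have h3 : Real.sqrt 2 ^ κ * Real.sqrt 2 ^ (-κ) = 1 := by
        rw [← Real.rpow_add (by positivity)]; simp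
      calc (1:ℝ) = Real.sqrt 2 ^ κ * Real.sqrt 2 ^ (-κ) := h3.symm
        _ ≤ Real.sqrt 2 ^ κ * ang a ^ (-κ) :=
          mul_le_mul_of_nonneg_left h2 (by positivity)
    have h0 : (0:ℝ) < 1 + Real.sqrt 2 / κ := by positivity
    calc ∫ y in a..b, ang y ^ (-(κ+1)) ≤ 1 + Real.sqrt 2 / κ := key
      _ = (1 + Real.sqrt 2 / κ) * 1 := (mul_one _).symm
      _ ≤ (1 + Real.sqrt 2 / κ) * (Real.sqrt 2 ^ κ * ang a ^ (-κ)) :=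
        mul_le_mul_of_nonneg_left hinv h0.le
      _ = (1 + Real.sqrt 2 / κ) * Real.sqrt 2 ^ κ * ang a ^ (-κ) := by ring


lemma uIcc_sub_Ici {a b : ℝ} (ha : 0 ≤ a) (hb : 0 ≤ b) : Set.uIcc a b ⊆ Set.Ici 0 := by
  rw [Set.uIcc_eq_union]
  rintro x (hx | hx)
  · exact ha.trans hx.1
  · exact hb.trans hx.1


section Wlem
variable {w : ℝ → ℝ} {r₀ : ℝ} (hr₀ : 0 < r₀)
  (hwc : ContinuousOn w (Set.Ici (0:ℝ)))
  (hwpos : ∀ r ≥ (0:ℝ), 0 < w r)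
  (hw : ∀ r ≥ r₀, w r = 1 / r)
  {W : ℝ → ℝ} (hW : ∀ r : ℝ, W r = ∫ τ in (0:ℝ)..r, w τ)

include hwc in
lemma wInt {a b : ℝ} (ha : 0 ≤ a) (hb : 0 ≤ b) : IntervalIntegrable w volume a b :=
  (hwc.mono (uIcc_sub_Ici ha hb)).intervalIntegrable

include hwc hW in
lemma W_add {a b : ℝ} (ha : 0 ≤ a) (hb : 0 ≤ b) : W b - W a = ∫ τ in a..b, w τ := by
  rw [hW a, hW b, ← intervalIntegral.integral_add_adjacent_intervals
    (wInt hwc le_rfl ha) (wInt hwc ha hb)]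
  ring

include hwc hwpos hW in
lemma W_mono {a b : ℝ} (ha : 0 ≤ a) (hab : a ≤ b) : W a ≤ W b := by
  have h := W_add hwc hW ha (ha.trans hab)
  have : 0 ≤ ∫ τ in a..b, w τ :=
    intervalIntegral.integral_nonneg hab (fun u hu => (hwpos u (ha.trans hu.1)).le)
  linarith

include hwc hwpos hW in
lemma W_nonneg {a : ℝ} (ha : 0 ≤ a) : 0 ≤ W a := by
  have h0 : W 0 = 0 := by rw [hW]; simp
  have := W_mono hwc hwpos hW le_rfl ha
  linarith

include hr₀ hwc hw hW in
lemma W_log {s : ℝ} (hs : r₀ ≤ s) : W s = W r₀ + Real.log (s / r₀) := by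
  have h := W_add hwc hW hr₀.le (hr₀.le.trans hs)
  have h2 : ∫ τ in r₀..s, w τ = ∫ τ in r₀..s, 1/τ := by
    apply intervalIntegral.integral_congr
    intro x hx
    have hx0 : r₀ ≤ x := by
      rw [Set.uIcc_of_le hs] at hx; exact hx.1
    exact hw x hx0
  have h3 : ∫ τ in r₀..s, 1/τ = Real.log (s / r₀) := by
    apply integral_one_div
    intro hmem
    rw [Set.uIcc_of_le hs] at hmem
    exact absurd hmem.1 (not_le.2 hr₀)
  rw [h2, h3] at h; linarith

include hwc hW in
lemma W_contOn {X : ℝ} (hX : 0 ≤ X) : ContinuousOn W (Set.Icc 0 X) := by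
  have : ContinuousOn (fun x => ∫ τ in (0:ℝ)..x, w τ) (Set.uIcc 0 X) :=
    intervalIntegral.continuousOn_primitive_interval' (wInt hwc le_rfl hX) Set.left_mem_uIcc
  rw [Set.uIcc_of_le hX] at this
  exact this.congr (fun x _ => hW x)

include hr₀ hwc hwpos hw hW in
lemma expW_le {s : ℝ} (hs : 0 ≤ s) :
    Real.exp (-(W s)) ≤ ang r₀ / ang s := by
  rcases le_total s r₀ with h | h
  · have h1 : Real.exp (-(W s)) ≤ 1 := by
      rw [Real.exp_le_one_iff]; linarith [W_nonneg hwc hwpos hW hs]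
    have h2 : ang s ≤ ang r₀ := ang_mono hs h
    calc Real.exp (-(W s)) ≤ 1 := h1
      _ ≤ ang r₀ / ang s := (one_le_div (ang_pos s)).2 h2
  · have h1 : Real.exp (-(W s)) = Real.exp (-(W r₀)) * (r₀ / s) := by
      rw [W_log hr₀ hwc hw hW h, neg_add, Real.exp_add, Real.exp_neg (Real.log _),
        Real.exp_log (div_pos (hr₀.trans_le h) hr₀)]
      field_simp
    have h2 : Real.exp (-(W r₀)) ≤ 1 := by
      rw [Real.exp_le_one_iff]; linarith [W_nonneg hwc hwpos hW hr₀.le]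
    have h3 : r₀ / s ≤ ang r₀ / ang s := by
      rw [div_le_div_iff₀ (by linarith) (ang_pos s)]
      have := ang_le_mul hr₀ h
      calc r₀ * ang s ≤ r₀ * (ang r₀ * (s / r₀)) := by
            apply mul_le_mul_of_nonneg_left this hr₀.le
        _ = ang r₀ * s := by field_simp
    calc Real.exp (-(W s)) = Real.exp (-(W r₀)) * (r₀ / s) := h1
      _ ≤ 1 * (ang r₀ / ang s) := by
          apply mul_le_mul h2 h3 (by positivity) (by norm_num)
      _ = ang r₀ / ang s := one_mul _

include hr₀ hwc hwpos hw hW in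
lemma expW_ge {m : ℝ} (hm : 0 ≤ m) :
    Real.exp (W m) ≤ (Real.exp (W r₀) * max 1 (1/r₀)) * ang m := by
  have hA1 : (1:ℝ) ≤ max 1 (1/r₀) := le_max_left _ _
  rcases le_total m r₀ with h | h
  · have h1 : Real.exp (W m) ≤ Real.exp (W r₀) :=
      Real.exp_le_exp.2 (W_mono hwc hwpos hW hm h)
    calc Real.exp (W m) ≤ Real.exp (W r₀) := h1
      _ = Real.exp (W r₀) * 1 := (mul_one _).symm
      _ ≤ (Real.exp (W r₀) * max 1 (1/r₀)) * ang m := by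
          have h2 : (0:ℝ) < Real.exp (W r₀) := Real.exp_pos _
          have h3 : Real.exp (W r₀) * 1 ≤ Real.exp (W r₀) * max 1 (1/r₀) :=
            mul_le_mul_of_nonneg_left hA1 h2.le
          have h4 : Real.exp (W r₀) * max 1 (1/r₀) ≤ Real.exp (W r₀) * max 1 (1/r₀) * ang m :=
            le_mul_of_one_le_right (mul_nonneg h2.le (le_trans zero_le_one hA1)) (one_le_ang m)
          linarith
  · have h1 : Real.exp (W m) = Real.exp (W r₀) * (m / r₀) := by
      rw [W_log hr₀ hwc hw hW h, Real.exp_add, Real.exp_log (div_pos (hr₀.trans_le h) hr₀)]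
    rw [h1]
    have h2 : m / r₀ ≤ max 1 (1/r₀) * ang m := by
      have hm' : m ≤ ang m := (le_abs_self m).trans (abs_le_ang m)
      have : m / r₀ = (1/r₀) * m := by ring
      rw [this]
      have h3 : (1/r₀) ≤ max 1 (1/r₀) := le_max_right _ _
      have h4 : (0:ℝ) ≤ 1/r₀ := by positivity
      nlinarith [ang_pos m]
    calc Real.exp (W r₀) * (m / r₀) ≤ Real.exp (W r₀) * (max 1 (1/r₀) * ang m) :=
          mul_le_mul_of_nonneg_left h2 (Real.exp_pos _).le
      _ = (Real.exp (W r₀) * max 1 (1/r₀)) * ang m := by ring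

end Wlem

-- w ≤ w 0 on (0,∞)
lemma w_le_w0 {w : ℝ → ℝ} (hwc : ContinuousOn w (Set.Ici (0:ℝ)))
    (hwanti : AntitoneOn w (Set.Ioi (0:ℝ))) {y : ℝ} (hy : 0 < y) : w y ≤ w 0 := by
  have h1 : Tendsto w (nhdsWithin 0 (Set.Ioi 0)) (nhds (w 0)) :=
    (hwc 0 Set.self_mem_Ici).mono_left (nhdsWithin_mono 0 Set.Ioi_subset_Ici_self)
  refine ge_of_tendsto h1 ?_
  filter_upwards [Ioo_mem_nhdsGT_of_mem (Set.left_mem_Ico.2 hy)] with x hx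
  exact hwanti hx.1 hy (le_of_lt hx.2)

lemma wy_le {w : ℝ → ℝ} {r₀ : ℝ} (hr₀ : 0 < r₀)
    (hwc : ContinuousOn w (Set.Ici (0:ℝ)))
    (hwpos : ∀ r ≥ (0:ℝ), 0 < w r)
    (hwanti : AntitoneOn w (Set.Ioi (0:ℝ)))
    (hw : ∀ r ≥ r₀, w r = 1 / r) {y : ℝ} (hy : 0 ≤ y) :
    w y * y ≤ max 1 (w 0 * r₀) := by
  rcases eq_or_lt_of_le hy with h0 | h0
  · rw [← h0]; simpa using le_trans zero_le_one (le_max_left _ _)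
  rcases le_total y r₀ with h | h
  · refine le_trans ?_ (le_max_right _ _)
    have hw0 : w y ≤ w 0 := w_le_w0 hwc hwanti h0
    have := (hwpos y hy)
    nlinarith [hwpos 0 le_rfl]
  · rw [hw y h]
    rw [one_div_mul_eq_div, div_self (by positivity : y ≠ 0)]
    exact le_max_left _ _

lemma Ebound (W : ℝ → ℝ) (r₀ : ℝ) (hr₀ : 0 < r₀) {r y m : ℝ} (hr : 0 ≤ r) (hy : 0 ≤ y)
    (hm0 : 0 ≤ m) (hmy : m ≤ y)
    (hWle : ∀ {s : ℝ}, 0 ≤ s → Real.exp (-(W s)) ≤ ang r₀ / ang s)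
    (hWge : ∀ {m : ℝ}, 0 ≤ m →
      Real.exp (W m) ≤ (Real.exp (W r₀) * max 1 (1/r₀)) * ang m) :
    Real.exp (-W r + 2 * W m - W y) ≤
      (ang r₀ ^ 2 * (Real.exp (W r₀) * max 1 (1/r₀)) ^ 2) * ang y / ang r := by
  set A := Real.exp (W r₀) * max 1 (1/r₀) with hA
  have hA0 : 0 < A := by
    have : (1:ℝ) ≤ max 1 (1/r₀) := le_max_left _ _
    positivity
  have hsplit : Real.exp (-W r + 2 * W m - W y) =
      Real.exp (-(W r)) * (Real.exp (W m))^2 * Real.exp (-(W y)) := by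
    rw [show -W r + 2 * W m - W y = (-(W r)) + (W m + W m) + (-(W y)) by ring,
      Real.exp_add, Real.exp_add, Real.exp_add, sq]
  have e1 := hWle hr
  have e2 := hWle hy
  have e3 := hWge hm0
  have hform : (ang r₀/ang r) * (A*ang m)^2 * (ang r₀/ang y)
      = (ang r₀^2*A^2) * (ang m^2/ang y) / ang r := by
    field_simp
  have hmm : ang m^2/ang y ≤ ang y := by
    rw [div_le_iff₀ (ang_pos y)]
    nlinarith [ang_mono hm0 hmy, ang_pos m, ang_pos y]
  calc Real.exp (-W r + 2 * W m - W y)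
      = Real.exp (-(W r)) * (Real.exp (W m))^2 * Real.exp (-(W y)) := hsplit
    _ ≤ (ang r₀/ang r) * (A*ang m)^2 * (ang r₀/ang y) := by
        have hra : 0 ≤ ang r₀ / ang r := div_nonneg (ang_pos r₀).le (ang_pos r).le
        apply mul_le_mul
          (mul_le_mul e1 (pow_le_pow_left₀ (Real.exp_pos _).le e3 2)
            (by positivity) hra) e2 (Real.exp_pos _).le
          (mul_nonneg hra (by positivity))
    _ = (ang r₀^2*A^2) * (ang m^2/ang y) / ang r := hform
    _ ≤ (ang r₀ ^ 2 * A ^ 2) * ang y / ang r := by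
        gcongr
        exact (ang_pos r).le

lemma ang_mul_rpow (y : ℝ) {κ : ℝ} (hκ : 0 < κ) :
    ang y * ang y ^ (-(κ+2)) = ang y ^ (-(κ+1)) := by
  rw [← Real.rpow_one_add' (ang_pos y).le (by intro h; linarith)]
  congr 1
  ring

lemma sqrt4_eq : Real.sqrt 4 = 2 := by
  rw [show (4:ℝ) = 2^2 by norm_num, Real.sqrt_sq (by norm_num : (0:ℝ) ≤ 2)]

lemma angr_le_two {r : ℝ} (hr0 : 0 ≤ r) (hr : r ≤ 1) : ang r ≤ 2 := by
  calc ang r ≤ Real.sqrt 4 := Real.sqrt_le_sqrt (by nlinarith)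
    _ = 2 := sqrt4_eq

lemma angr_le_two_mul {r : ℝ} (hr : 1 ≤ r) : ang r ≤ 2 * r := by
  have h := ang_le_sqrt2_mul hr
  have hs : Real.sqrt 2 ≤ 2 := by
    calc Real.sqrt 2 ≤ Real.sqrt 4 := Real.sqrt_le_sqrt (by norm_num)
      _ = 2 := sqrt4_eq
  nlinarith

/-- Estimate for the homogeneous part:
|∫_{|t−r|}^{t+r} E₋(t,r,y)(ψ(y)+φ'(y)+w(y)φ(y)) dy| ≲ C₀ r ⟨r⟩^{−2} ⟨t−r⟩^{−κ}. -/
theorem stmt8 (w : ℝ → ℝ) (r₀ : ℝ) (hr₀ : 0 < r₀)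
    (hwc : ContinuousOn w (Set.Ici (0:ℝ)))
    (hwpos : ∀ r ≥ (0:ℝ), 0 < w r)
    (hwanti : AntitoneOn w (Set.Ioi (0:ℝ)))
    (hw : ∀ r ≥ r₀, w r = 1 / r)
    (W : ℝ → ℝ) (hW : ∀ r : ℝ, W r = ∫ τ in (0:ℝ)..r, w τ)
    (κ : ℝ) (hκ : 0 < κ) :
    ∃ K : ℝ, 0 < K ∧
      ∀ C₀ : ℝ, 0 < C₀ → ∀ φ ψ : ℝ → ℝ,
        ContDiffOn ℝ 1 φ (Set.Ici (0:ℝ)) →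
        ContinuousOn ψ (Set.Ici (0:ℝ)) →
        (∀ r ≥ (0:ℝ), |φ r| ≤ C₀ * r * Real.sqrt (1 + r ^ 2) ^ (-(κ + 2))) →
        (∀ r ≥ (0:ℝ), |deriv φ r| + |ψ r| ≤ C₀ * Real.sqrt (1 + r ^ 2) ^ (-(κ + 2))) →
        ∀ t r : ℝ, 0 < t → 0 < r →
          |∫ y in (|t - r|)..(t + r),
              Real.exp (-W r + 2 * W ((y - t + r) / 2) - W y) *
                (ψ y + deriv φ y + w y * φ y)| ≤
            K * C₀ * r * Real.sqrt (1 + r ^ 2) ^ (-(2:ℝ)) *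
              Real.sqrt (1 + (t - r) ^ 2) ^ (-κ) := by
  obtain ⟨Cκ, hCκ0, hCκ⟩ := lemA κ hκ
  set A : ℝ := Real.exp (W r₀) * max 1 (1/r₀) with hA
  have hA0 : 0 < A := by
    have h1 : (1:ℝ) ≤ max 1 (1/r₀) := le_max_left _ _
    have := Real.exp_pos (W r₀)
    nlinarith
  set M : ℝ := max 1 (w 0 * r₀) with hM
  have hM1 : (1:ℝ) ≤ M := le_max_left _ _
  set D : ℝ := ang r₀ ^ 2 * A ^ 2 * (1 + M) with hD
  have hD0 : 0 < D := by
    rw [hD]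
    exact mul_pos (mul_pos (pow_pos (ang_pos r₀) 2) (pow_pos hA0 2)) (by linarith)
  refine ⟨D * (4 + 2 * Cκ), mul_pos hD0 (by linarith), ?_⟩
  intro C₀ hC₀ φ ψ hφ hψ hφb hφ'b t r ht hr
  set a : ℝ := |t - r| with ha
  set b : ℝ := t + r with hb
  have ha0 : 0 ≤ a := abs_nonneg _
  have hab : a ≤ b := abs_le.2 ⟨by simp [hb]; linarith, by simp [hb]; linarith⟩
  have hba : b - a ≤ 2 * r := by
    have := le_abs_self (t - r); simp only [ha, hb] at *; linarith
  have hatr : t - r ≤ a := le_abs_self _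
  have hart : r - t ≤ a := by rw [ha, abs_sub_comm]; exact le_abs_self _
  set f : ℝ → ℝ := fun y =>
    Real.exp (-W r + 2 * W ((y - t + r) / 2) - W y) * (ψ y + deriv φ y + w y * φ y) with hf
  -- pointwise bound
  have hptw : ∀ y ∈ Set.Icc a b, |f y| ≤ D * C₀ / ang r * ang y ^ (-(κ+1)) := by
    intro y hy
    have hy0 : 0 ≤ y := ha0.trans hy.1
    have hm0 : 0 ≤ (y - t + r) / 2 := by
      have := hatr.trans hy.1; linarith
    have hmy : (y - t + r) / 2 ≤ y := by
      have := hart.trans hy.1; linarith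
    have hE := Ebound W r₀ hr₀ hr.le hy0 hm0 hmy
      (fun {s} hs => expW_le hr₀ hwc hwpos hw hW hs)
      (fun {m} hm => expW_ge hr₀ hwc hwpos hw hW hm)
    have hP : (0:ℝ) < ang y ^ (-(κ+2)) := ang_rpow_pos y _
    have hsum : |ψ y + deriv φ y + w y * φ y| ≤ C₀ * (1 + M) * ang y ^ (-(κ+2)) := by
      have h1 := hφ'b y hy0
      have h2 := hφb y hy0
      have hwy := (hwpos y hy0).le
      have h3 : w y * |φ y| ≤ C₀ * M * ang y ^ (-(κ+2)) := by
        have hstep : w y * |φ y| ≤ w y * (C₀ * y * ang y ^ (-(κ+2))) :=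
          mul_le_mul_of_nonneg_left h2 hwy
        have hstep2 : w y * (C₀ * y * ang y ^ (-(κ+2)))
            = (w y * y) * C₀ * ang y ^ (-(κ+2)) := by ring
        have hwyM : w y * y ≤ M :=
          le_trans (wy_le hr₀ hwc hwpos hwanti hw hy0) (le_of_eq hM.symm)
        calc w y * |φ y| ≤ (w y * y) * C₀ * ang y ^ (-(κ+2)) := by rw [← hstep2]; exact hstep
          _ ≤ M * C₀ * ang y ^ (-(κ+2)) :=
            mul_le_mul_of_nonneg_right (mul_le_mul_of_nonneg_right hwyM hC₀.le) hP.le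
          _ = C₀ * M * ang y ^ (-(κ+2)) := by ring
      calc |ψ y + deriv φ y + w y * φ y| ≤ |ψ y + deriv φ y| + |w y * φ y| := abs_add_le _ _
        _ ≤ (|ψ y| + |deriv φ y|) + w y * |φ y| := by
            rw [abs_mul, abs_of_nonneg hwy]
            exact add_le_add (abs_add_le _ _) le_rfl
        _ ≤ C₀ * ang y ^ (-(κ+2)) + C₀ * M * ang y ^ (-(κ+2)) := by
            refine add_le_add ?_ h3
            calc |ψ y| + |deriv φ y| = |deriv φ y| + |ψ y| := by ring
              _ ≤ C₀ * Real.sqrt (1 + y^2) ^ (-(κ+2)) := h1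
              _ = C₀ * ang y ^ (-(κ+2)) := rfl
        _ = C₀ * (1 + M) * ang y ^ (-(κ+2)) := by ring
    have habs : |f y| = Real.exp (-W r + 2 * W ((y - t + r) / 2) - W y) *
        |ψ y + deriv φ y + w y * φ y| := by
      rw [hf, abs_mul, abs_of_pos (Real.exp_pos _)]
    rw [habs]
    calc Real.exp (-W r + 2 * W ((y - t + r) / 2) - W y) * |ψ y + deriv φ y + w y * φ y|
        ≤ ((ang r₀ ^ 2 * A ^ 2) * ang y / ang r) * (C₀ * (1 + M) * ang y ^ (-(κ+2))) := by
          refine mul_le_mul hE hsum (abs_nonneg _) ?_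
          have := ang_pos y; have := ang_pos r; have := ang_pos r₀
          positivity
      _ = D * C₀ / ang r * (ang y * ang y ^ (-(κ+2))) := by
          rw [hD]; field_simp
      _ = D * C₀ / ang r * ang y ^ (-(κ+1)) := by rw [ang_mul_rpow y hκ]
  -- integrability
  have hIocsub : Set.Ioc a b ⊆ Set.Ici (0:ℝ) := fun x hx => le_of_lt (lt_of_le_of_lt ha0 hx.1)
  have hIocsub' : Set.Ioc a b ⊆ Set.Ioi (0:ℝ) := fun x hx => lt_of_le_of_lt ha0 hx.1
  have hWcb : ContinuousOn W (Set.Icc 0 b) := W_contOn hwc hW (le_trans ha0 hab)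
  have hWcr : ContinuousOn W (Set.Icc 0 r) := W_contOn hwc hW hr.le
  have hφ'c : ContinuousOn (deriv φ) (Set.Ioi (0:ℝ)) :=
    (hφ.mono Set.Ioi_subset_Ici_self).continuousOn_deriv_of_isOpen isOpen_Ioi le_rfl
  have hfc : ContinuousOn f (Set.Ioc a b) := by
    apply ContinuousOn.mul
    · apply Real.continuous_exp.comp_continuousOn
      apply ContinuousOn.sub
      · apply ContinuousOn.add continuousOn_const
        apply ContinuousOn.mul continuousOn_const
        apply hWcr.comp ((by fun_prop : Continuous fun y : ℝ => (y - t + r)/2).continuousOn)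
        intro y hy
        constructor
        · have h5 := hatr.trans (le_of_lt hy.1)
          simp only [Set.mem_Icc]
          linarith
        · have h6 := hy.2
          simp only [hb] at h6 ⊢
          linarith
      · exact hWcb.mono (fun x hx => ⟨(hIocsub hx), hx.2⟩)
    · apply ContinuousOn.add
      · exact ContinuousOn.add (hψ.mono hIocsub) (hφ'c.mono hIocsub')
      · exact ContinuousOn.mul (hwc.mono hIocsub) (hφ.continuousOn.mono hIocsub)
  have hgint : ∀ c d : ℝ, IntervalIntegrable (fun y => D * C₀ / ang r * ang y ^ (-(κ+1)))
      volume c d := fun c d =>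
    (continuous_const.mul (ang_rpow_cont _)).intervalIntegrable c d
  have hfi : IntervalIntegrable f volume a b := by
    rw [intervalIntegrable_iff_integrableOn_Ioc_of_le hab]
    apply MeasureTheory.Integrable.mono'
      (g := fun y => D * C₀ / ang r * ang y ^ (-(κ+1)))
      (((continuous_const.mul (ang_rpow_cont _))).integrableOn_Ioc)
      (hfc.aestronglyMeasurable measurableSet_Ioc)
    rw [ae_restrict_iff' measurableSet_Ioc]
    exact ae_of_all _ (fun y hy => by
      rw [Real.norm_eq_abs]; exact hptw y (Set.Ioc_subset_Icc_self hy))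
  -- integral bound
  set I : ℝ := ∫ y in a..b, ang y ^ (-(κ+1)) with hI
  have hIle : |∫ y in a..b, f y| ≤ D * C₀ / ang r * I := by
    calc |∫ y in a..b, f y| ≤ ∫ y in a..b, |f y| :=
        intervalIntegral.abs_integral_le_integral_abs hab
      _ ≤ ∫ y in a..b, D * C₀ / ang r * ang y ^ (-(κ+1)) := by
          apply intervalIntegral.integral_mono_on hab hfi.abs (hgint a b)
          exact hptw
      _ = D * C₀ / ang r * I := by rw [hI, intervalIntegral.integral_const_mul]
  have hP0 : (0:ℝ) < ang a ^ (-κ) := ang_rpow_pos a _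
  have hI0 : 0 ≤ I := by
    rw [hI]
    exact intervalIntegral.integral_nonneg hab (fun y _ => (ang_rpow_pos y _).le)
  have hI1 : I ≤ 2 * r * ang a ^ (-κ) := by
    have hpt : ∀ y ∈ Set.Icc a b, ang y ^ (-(κ+1)) ≤ ang a ^ (-κ) := by
      intro y hy
      calc ang y ^ (-(κ+1)) ≤ ang a ^ (-(κ+1)) := ang_rpow_anti ha0 hy.1 (by linarith)
        _ ≤ ang a ^ (-κ) :=
          Real.rpow_le_rpow_of_exponent_le (one_le_ang a) (by linarith)
    calc I ≤ ∫ _ in a..b, ang a ^ (-κ) := by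
          rw [hI]
          exact intervalIntegral.integral_mono_on hab
            ((ang_rpow_cont _).intervalIntegrable _ _) intervalIntegrable_const hpt
      _ = (b - a) * ang a ^ (-κ) := by simp [smul_eq_mul]
      _ ≤ 2 * r * ang a ^ (-κ) := mul_le_mul_of_nonneg_right hba hP0.le
  have hI2 : I ≤ Cκ * ang a ^ (-κ) := hCκ a b ha0 hab
  -- combine
  have key : D * ang r * I ≤ D * (4 + 2 * Cκ) * r * ang a ^ (-κ) := by
    rcases le_total r 1 with h1 | h1
    · have h2 : ang r ≤ 2 := angr_le_two hr.le h1
      have h4 : ang r * I ≤ 2 * (2 * r * ang a ^ (-κ)) :=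
        mul_le_mul h2 hI1 hI0 (by norm_num)
      have h3 : D * ang r * I ≤ D * 2 * (2 * r * ang a ^ (-κ)) := by
        calc D * ang r * I = D * (ang r * I) := by ring
          _ ≤ D * (2 * (2 * r * ang a ^ (-κ))) := mul_le_mul_of_nonneg_left h4 hD0.le
          _ = D * 2 * (2 * r * ang a ^ (-κ)) := by ring
      nlinarith [mul_nonneg (mul_pos hD0 hCκ0).le (mul_pos hr hP0).le]
    · have h2 : ang r ≤ 2 * r := angr_le_two_mul h1
      have h4 : ang r * I ≤ (2 * r) * (Cκ * ang a ^ (-κ)) :=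
        mul_le_mul h2 hI2 hI0 (by linarith)
      have h3 : D * ang r * I ≤ D * (2 * r) * (Cκ * ang a ^ (-κ)) := by
        calc D * ang r * I = D * (ang r * I) := by ring
          _ ≤ D * ((2 * r) * (Cκ * ang a ^ (-κ))) := mul_le_mul_of_nonneg_left h4 hD0.le
          _ = D * (2 * r) * (Cκ * ang a ^ (-κ)) := by ring
      nlinarith [mul_nonneg hD0.le (mul_pos hr hP0).le]
  have hsqa : Real.sqrt (1 + (t - r)^2) = ang a := by
    rw [ang, ha, sq_abs]
  have hsqr : Real.sqrt (1 + r^2) ^ (-(2:ℝ)) = (ang r ^ 2)⁻¹ := by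
    rw [show Real.sqrt (1 + r^2) = ang r from rfl, show (-(2:ℝ)) = -((2:ℕ):ℝ) by norm_num,
      Real.rpow_neg (ang_pos r).le, Real.rpow_natCast]
  have hfin : D * C₀ / ang r * I ≤
      D * (4 + 2*Cκ) * C₀ * r * (ang r ^ 2)⁻¹ * ang a ^ (-κ) := by
    have hX := ang_pos r
    have heq : D * C₀ / ang r * I = C₀ * ((D * ang r * I) / ang r ^ 2) := by
      field_simp
    rw [heq]
    calc C₀ * ((D * ang r * I) / ang r ^ 2)
        ≤ C₀ * ((D * (4 + 2*Cκ) * r * ang a ^ (-κ)) / ang r ^ 2) := by gcongr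
      _ = D * (4 + 2*Cκ) * C₀ * r * (ang r ^ 2)⁻¹ * ang a ^ (-κ) := by
          field_simp
  calc |∫ y in a..b, f y| ≤ D * C₀ / ang r * I := hIle
    _ ≤ D * (4 + 2*Cκ) * C₀ * r * (ang r ^ 2)⁻¹ * ang a ^ (-κ) := hfin
    _ = D * (4 + 2*Cκ) * C₀ * r * Real.sqrt (1 + r^2) ^ (-(2:ℝ)) *
        Real.sqrt (1 + (t - r)^2) ^ (-κ) := by rw [hsqr, hsqa]
end

section
/- Let C > 0 and p > 1. Suppose f : [0,∞) → ℝ satisfies f(t) ≥ 1 for all t ≥ 0 and f(t) ≥ C ∫₀ᵗ (1 - e^{-(t-τ)}) f(τ)ᵖ dτ for all t ≥ 0 (in particular the integral is finite whenever f is defined). Then f cannot be defined (finite) on all of [0,∞); i.e., f blows up in finite time. -/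
set_option maxHeartbeats 1000000 in
/-- Lemma A.2: if f ≥ 1 and f(t) ≥ C∫₀ᵗ(1−e^{−(t−τ)})f(τ)ᵖ dτ for all t ≥ 0,
then no such f can exist globally on [0,∞); f blows up in finite time. -/
theorem stmt14 (C p : ℝ) (hC : 0 < C) (hp : 1 < p) :
    ¬ ∃ f : ℝ → ℝ,
      (∀ t ≥ (0:ℝ), 1 ≤ f t) ∧
      (∀ t ≥ (0:ℝ), IntervalIntegrable
        (fun τ => (1 - Real.exp (-(t - τ))) * f τ ^ p) MeasureTheory.volume 0 t) ∧
      (∀ t ≥ (0:ℝ),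
        C * ∫ τ in (0:ℝ)..t, (1 - Real.exp (-(t - τ))) * f τ ^ p ≤ f t) := by
  rintro ⟨f, hf1, hfInt, hfIneq⟩
  have hp0 : (0:ℝ) ≤ p := by linarith
  -- kernel lower bound : 1 - e^{-x} ≥ x/2 for x ∈ [0,1]
  have hker : ∀ x : ℝ, 0 ≤ x → x ≤ 1 → x / 2 ≤ 1 - Real.exp (-x) := by
    intro x hx0 hx1
    have h1 : 1 + x ≤ Real.exp x := by linarith [Real.add_one_le_exp x]
    have h2 : Real.exp (-x) * Real.exp x = 1 := by
      rw [← Real.exp_add]; simp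
    have h3 : (0:ℝ) < Real.exp (-x) := Real.exp_pos _
    have h4 : Real.exp (-x) * (1 + x) ≤ 1 := by
      calc Real.exp (-x) * (1 + x) ≤ Real.exp (-x) * Real.exp x :=
            mul_le_mul_of_nonneg_left h1 h3.le
        _ = 1 := h2
    nlinarith [mul_nonneg hx0 (sub_nonneg.2 hx1)]
  -- key step estimate
  have key : ∀ A T δ : ℝ, 0 ≤ A → 0 ≤ T → 0 < δ →
      (∀ τ, T ≤ τ → A ≤ f τ) → ∀ t, T + δ ≤ t →
      C * ((1 - Real.exp (-(δ/2))) * (A ^ p * (t - δ/2 - T))) ≤ f t := by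
    intro A T δ hA hT hδ hfA t ht
    have ht0 : (0:ℝ) ≤ t := by linarith
    have h1 : T ≤ t - δ/2 := by linarith
    have h2 : t - δ/2 ≤ t := by linarith
    have hInt := hfInt t ht0
    set g : ℝ → ℝ := fun τ => (1 - Real.exp (-(t - τ))) * f τ ^ p with hg
    have hsub : ∀ a b : ℝ, 0 ≤ a → a ≤ b → b ≤ t →
        IntervalIntegrable g MeasureTheory.volume a b := by
      intro a b ha hab hbt
      exact hInt.mono_set (by
        rw [Set.uIcc_of_le hab, Set.uIcc_of_le ht0]
        exact Set.Icc_subset_Icc ha hbt)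
    have hgnn : ∀ τ : ℝ, 0 ≤ τ → τ ≤ t → 0 ≤ g τ := by
      intro τ hτ0 hτt
      have he : Real.exp (-(t - τ)) ≤ 1 := by
        calc Real.exp (-(t - τ)) ≤ Real.exp 0 := Real.exp_le_exp.2 (by linarith)
          _ = 1 := Real.exp_zero
      have hfτ : (0:ℝ) ≤ f τ := by linarith [hf1 τ hτ0]
      exact mul_nonneg (by linarith) (Real.rpow_nonneg hfτ p)
    have e1 := intervalIntegral.integral_add_adjacent_intervals
      (hsub 0 T le_rfl hT (by linarith)) (hsub T (t - δ/2) hT h1 h2)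
    have e2 := intervalIntegral.integral_add_adjacent_intervals
      (hsub 0 (t - δ/2) le_rfl (by linarith) h2) (hsub (t - δ/2) t (by linarith) h2 le_rfl)
    have b1 : (0:ℝ) ≤ ∫ τ in (0:ℝ)..T, g τ :=
      intervalIntegral.integral_nonneg hT (fun u hu => hgnn u hu.1 (by linarith [hu.2]))
    have b3 : (0:ℝ) ≤ ∫ τ in (t - δ/2)..t, g τ :=
      intervalIntegral.integral_nonneg h2 (fun u hu => hgnn u (by linarith [hu.1]) hu.2)
    have b2 : (1 - Real.exp (-(δ/2))) * A ^ p * (t - δ/2 - T) ≤ ∫ τ in T..(t - δ/2), g τ := by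
      have hconst : ∫ τ in T..(t - δ/2), (1 - Real.exp (-(δ/2))) * A ^ p
          = (t - δ/2 - T) * ((1 - Real.exp (-(δ/2))) * A ^ p) := by
        rw [intervalIntegral.integral_const]; simp [smul_eq_mul]
      have hmono : ∫ τ in T..(t - δ/2), (1 - Real.exp (-(δ/2))) * A ^ p
          ≤ ∫ τ in T..(t - δ/2), g τ := by
        apply intervalIntegral.integral_mono_on h1 intervalIntegrable_const
          (hsub T (t - δ/2) hT h1 h2)
        intro x hx
        have hx1 : T ≤ x := hx.1
        have hx2 : x ≤ t - δ/2 := hx.2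
        have hAfx : A ≤ f x := hfA x hx1
        have hker1 : Real.exp (-(t - x)) ≤ Real.exp (-(δ/2)) :=
          Real.exp_le_exp.2 (by linarith)
        have heδ : Real.exp (-(δ/2)) ≤ 1 := by
          calc Real.exp (-(δ/2)) ≤ Real.exp 0 := Real.exp_le_exp.2 (by linarith)
            _ = 1 := Real.exp_zero
        exact mul_le_mul (by linarith) (Real.rpow_le_rpow hA hAfx hp0)
          (Real.rpow_nonneg hA p) (by linarith)
      rw [hconst] at hmono
      linarith
    have btot : (1 - Real.exp (-(δ/2))) * A ^ p * (t - δ/2 - T) ≤ ∫ τ in (0:ℝ)..t, g τ := by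
      rw [← e2, ← e1]; linarith
    have hlast := hfIneq t ht0
    have hmul : C * ((1 - Real.exp (-(δ/2))) * A ^ p * (t - δ/2 - T))
        ≤ C * ∫ τ in (0:ℝ)..t, g τ := mul_le_mul_of_nonneg_left btot hC.le
    calc C * ((1 - Real.exp (-(δ/2))) * (A ^ p * (t - δ/2 - T)))
        = C * ((1 - Real.exp (-(δ/2))) * A ^ p * (t - δ/2 - T)) := by ring
      _ ≤ C * ∫ τ in (0:ℝ)..t, g τ := hmul
      _ ≤ f t := hlast
  -- parameters
  obtain ⟨α, hα⟩ : ∃ x : ℝ, x = max 1 (Real.log (2 / C)) := ⟨_, rfl⟩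
  have hα1 : (1:ℝ) ≤ α := hα ▸ le_max_left _ _
  have hαlog : Real.log (2 / C) ≤ α := hα ▸ le_max_right _ _
  obtain ⟨k₀, hk₀⟩ := exists_nat_gt (max 2 (8 / (p - 1)))
  obtain ⟨K, hK⟩ : ∃ x : ℝ, x = (k₀ : ℝ) := ⟨_, rfl⟩
  have hK2 : (2:ℝ) ≤ K := by
    rw [hK]; exact le_of_lt (lt_of_le_of_lt (le_max_left _ _) hk₀)
  have hK8 : 8 ≤ (p - 1) * K := by
    have h8 : 8 / (p - 1) ≤ K := by
      rw [hK]; exact le_of_lt (lt_of_le_of_lt (le_max_right _ _) hk₀)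
    have hp1 : (0:ℝ) < p - 1 := by linarith
    calc (8:ℝ) = (p - 1) * (8 / (p - 1)) := by field_simp
      _ ≤ (p - 1) * K := mul_le_mul_of_nonneg_left h8 hp1.le
  obtain ⟨A₀, hA₀⟩ : ∃ x : ℝ, x = Real.exp (α * K ^ 2) := ⟨_, rfl⟩
  have hA₀pos : 0 < A₀ := hA₀ ▸ Real.exp_pos _
  obtain ⟨T₀, hT₀⟩ : ∃ x : ℝ, x = 2 + 2 * A₀ / C := ⟨_, rfl⟩
  have hACpos : 0 < 2 * A₀ / C := div_pos (by linarith) hC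
  have hT₀2 : (2:ℝ) ≤ T₀ := by rw [hT₀]; linarith
  -- bootstrap : f ≥ A₀ on [T₀, ∞)
  have base : ∀ t, T₀ ≤ t → A₀ ≤ f t := by
    intro t ht
    have ht2 : (2:ℝ) ≤ t := le_trans hT₀2 ht
    have h1 := key 1 0 2 zero_le_one le_rfl two_pos (fun τ hτ => hf1 τ hτ) t (by linarith)
    rw [Real.one_rpow] at h1
    have he : Real.exp (-(2/2 : ℝ)) = Real.exp (-1) := by norm_num
    rw [he] at h1
    have hk := hker 1 zero_le_one le_rfl
    have hA' : 2 * A₀ / C ≤ t - 2/2 - 0 := by rw [hT₀] at ht; linarith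
    have hkey : A₀ ≤ C * ((1 - Real.exp (-1)) * (1 * (t - 2/2 - 0))) := by
      have h2 : C * ((1/2) * (2 * A₀ / C)) ≤ C * ((1 - Real.exp (-1)) * (1 * (t - 2/2 - 0))) := by
        apply mul_le_mul_of_nonneg_left _ hC.le
        rw [one_mul]
        exact mul_le_mul (by linarith) hA' hACpos.le (by linarith)
      have h3 : C * ((1/2) * (2 * A₀ / C)) = A₀ := by field_simp
      linarith
    linarith
  -- the iteration
  have claim : ∀ n : ℕ, ∀ t, T₀ + (2 - 2 / (n + 1 : ℝ)) ≤ t →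
      Real.exp (α * (K + n) ^ 2) ≤ f t := by
    intro n
    induction n with
    | zero =>
      intro t ht
      push_cast at ht ⊢
      norm_num at ht ⊢
      rw [← hA₀]
      exact base t ht
    | succ n IH =>
      intro t ht
      have hn0 : (0:ℝ) ≤ (n:ℝ) := Nat.cast_nonneg n
      have hn1 : (0:ℝ) < (n:ℝ) + 1 := by linarith
      have hn2 : (0:ℝ) < (n:ℝ) + 2 := by linarith
      obtain ⟨m, hm⟩ : ∃ x : ℝ, x = K + n := ⟨_, rfl⟩
      have hm2 : (2:ℝ) ≤ m := by rw [hm]; linarith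
      have hmn : (n:ℝ) + 2 ≤ m := by rw [hm]; linarith
      have hm0 : (0:ℝ) < m := by linarith
      have hmsq : (0:ℝ) < m ^ 2 := pow_pos hm0 2
      have hm4 : (0:ℝ) < m ^ 4 := pow_pos hm0 4
      obtain ⟨A, hA⟩ : ∃ x : ℝ, x = Real.exp (α * m ^ 2) := ⟨_, rfl⟩
      obtain ⟨T, hT⟩ : ∃ x : ℝ, x = T₀ + (2 - 2 / ((n:ℝ) + 1)) := ⟨_, rfl⟩
      obtain ⟨δ, hδ⟩ : ∃ x : ℝ, x = 2 / m ^ 2 := ⟨_, rfl⟩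
      have hδpos : 0 < δ := by rw [hδ]; exact div_pos two_pos hmsq
      have hδhalf : δ / 2 = 1 / m ^ 2 := by rw [hδ]; ring
      have hTnn : 0 ≤ T := by
        have hd : 2 / ((n:ℝ) + 1) ≤ 2 := by
          rw [div_le_iff₀ hn1]; nlinarith
        rw [hT]; linarith
      have hstep : T + δ ≤ t := by
        have hc : 2 / m ^ 2 ≤ 2 / (((n:ℝ) + 1) * ((n:ℝ) + 2)) := by
          rw [div_le_div_iff₀ hmsq (by positivity)]
          nlinarith
        have hiden : 2 / (((n:ℝ) + 1) * ((n:ℝ) + 2)) = 2 / ((n:ℝ) + 1) - 2 / ((n:ℝ) + 2) := by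
          field_simp
          ring
        push_cast at ht
        have h22 : ((n:ℝ) + 1 + 1) = (n:ℝ) + 2 := by ring
        rw [h22] at ht
        rw [hT, hδ]
        linarith
      have hfA : ∀ τ, T ≤ τ → A ≤ f τ := by
        intro τ hτ
        rw [hA, hm]
        exact IH τ (by rw [← hT]; exact hτ)
      have hApos : (0:ℝ) < A := by rw [hA]; exact Real.exp_pos _
      have h1 := key A T δ hApos.le hTnn hδpos hfA t hstep
      have hlen : δ / 2 ≤ t - δ/2 - T := by linarith
      have hek : δ / 2 / 2 ≤ 1 - Real.exp (-(δ/2)) := by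
        have hx1 : δ / 2 ≤ 1 := by
          rw [hδhalf, div_le_one hmsq]
          nlinarith
        exact hker (δ/2) (by linarith) hx1
      have hApow : A ^ p = Real.exp (α * m ^ 2 * p) := by
        rw [hA, Real.rpow_def_of_pos (Real.exp_pos _), Real.log_exp]
      have hApp : (0:ℝ) < A ^ p := by rw [hApow]; exact Real.exp_pos _
      have hchain : C * ((δ/2/2) * (A ^ p * (δ/2))) ≤ f t := by
        refine le_trans ?_ h1
        apply mul_le_mul_of_nonneg_left _ hC.le
        apply mul_le_mul hek (mul_le_mul_of_nonneg_left hlen hApp.le)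
          (by positivity) (by linarith [hek, hδpos])
      -- numeric estimate : exp(α(m+1)²) ≤ C * ((δ/4) * (A^p * (δ/2)))
      have hEm : m + 1 ≤ Real.exp m := Real.add_one_le_exp m
      have hm4e : m ^ 4 ≤ Real.exp (4 * m) := by
        have h4 : Real.exp (4 * m) = (Real.exp m) ^ 4 := by
          rw [show (4:ℝ) * m = m + m + m + m by ring, Real.exp_add, Real.exp_add,
            Real.exp_add]; ring
        rw [h4]
        exact pow_le_pow_left₀ hm0.le (by linarith) 4
      have h2C : 2 / C ≤ Real.exp α := by
        calc 2 / C = Real.exp (Real.log (2 / C)) :=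
              (Real.exp_log (by positivity)).symm
          _ ≤ Real.exp α := Real.exp_le_exp.2 hαlog
      have hE : 5 * α * m ≤ α * m ^ 2 * p - α * (m + 1) ^ 2 := by
        have h8m : 8 * m ≤ (p - 1) * m ^ 2 := by nlinarith
        nlinarith
      have hbig : 2 / C * m ^ 4 * Real.exp (α * (m + 1) ^ 2) ≤ Real.exp (α * m ^ 2 * p) := by
        have hf1' : 2 / C * m ^ 4 ≤ Real.exp (α * m ^ 2 * p - α * (m + 1) ^ 2) := by
          calc 2 / C * m ^ 4 ≤ Real.exp α * Real.exp (4 * m) := by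
                apply mul_le_mul h2C hm4e hm4.le (Real.exp_pos _).le
            _ = Real.exp (α + 4 * m) := (Real.exp_add _ _).symm
            _ ≤ Real.exp (5 * α * m) := by
                apply Real.exp_le_exp.2
                nlinarith
            _ ≤ Real.exp (α * m ^ 2 * p - α * (m + 1) ^ 2) := Real.exp_le_exp.2 hE
        have hexp : Real.exp (α * m ^ 2 * p - α * (m + 1) ^ 2) * Real.exp (α * (m + 1) ^ 2)
            = Real.exp (α * m ^ 2 * p) := by
          rw [← Real.exp_add]; ring_nf
        calc 2 / C * m ^ 4 * Real.exp (α * (m + 1) ^ 2)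
            ≤ Real.exp (α * m ^ 2 * p - α * (m + 1) ^ 2) * Real.exp (α * (m + 1) ^ 2) :=
              mul_le_mul_of_nonneg_right hf1' (Real.exp_pos _).le
          _ = Real.exp (α * m ^ 2 * p) := hexp
      have hgoalred : Real.exp (α * (m + 1) ^ 2) ≤ C * ((δ/2/2) * (A ^ p * (δ/2))) := by
        have h5 : C * ((δ/2/2) * (A ^ p * (δ/2)))
            = C * Real.exp (α * m ^ 2 * p) / (2 * m ^ 4) := by
          rw [hApow, hδhalf]
          have hmne : m ≠ 0 := ne_of_gt hm0
          field_simp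
        rw [h5, le_div_iff₀ (by linarith : (0:ℝ) < 2 * m ^ 4)]
        have := mul_le_mul_of_nonneg_left hbig hC.le
        have hCne : C ≠ 0 := ne_of_gt hC
        have heq : C * (2 / C * m ^ 4 * Real.exp (α * (m + 1) ^ 2))
            = Real.exp (α * (m + 1) ^ 2) * (2 * m ^ 4) := by
          field_simp
        linarith [heq ▸ this]
      have hmm : K + ((n:ℕ) + 1 : ℕ) = m + 1 := by rw [hm]; push_cast; ring
      calc Real.exp (α * (K + ((n:ℕ) + 1 : ℕ)) ^ 2)
          = Real.exp (α * (m + 1) ^ 2) := by rw [hmm]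
        _ ≤ C * ((δ/2/2) * (A ^ p * (δ/2))) := hgoalred
        _ ≤ f t := hchain
  -- contradiction
  obtain ⟨n, hn⟩ := exists_nat_gt (f (T₀ + 2))
  have hn0 : (0:ℝ) ≤ (n:ℝ) := Nat.cast_nonneg n
  have h1 := claim n (T₀ + 2) (by
    have : (0:ℝ) < 2 / ((n:ℝ) + 1) := by positivity
    linarith)
  have h2 : (n:ℝ) ≤ Real.exp (α * (K + n) ^ 2) := by
    have hKn : (n:ℝ) ≤ (K + n) ^ 2 := by nlinarith
    have h3 : (n:ℝ) ≤ α * (K + n) ^ 2 := by nlinarith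
    linarith [Real.add_one_le_exp (α * (K + n) ^ 2)]
  linarith
end

section
/- Let C₁, C₂ > 0, α, β ≥ 0, ε ∈ (0,1], p > 1, and κ = 1. Suppose f : [1, T*) → ℝ satisfies f(y) ≥ C₁ε^α and f(y) ≥ C₂ε^β ∫₁^y (1 - η/y) f(η)ᵖ/η dη for all y in its (maximal) domain. Then T* < ∞ and there is a constant C* = C*(C₁,C₂,p) such that T* ≤ exp(C* ε^{-((p-1)α+β)}). -/
open MeasureTheory intervalIntegral

private lemma my_sqrt_pow {x : ℝ} (hx : 0 ≤ x) (n : ℕ) :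
    Real.sqrt (x ^ n) = Real.sqrt x ^ n := by
  induction n with
  | zero => simp
  | succ n ih => rw [pow_succ, Real.sqrt_mul (pow_nonneg hx n), ih, pow_succ]

private lemma my_geom_bound {r : ℝ} (h0 : 0 ≤ r) (h1 : r < 1) (n : ℕ) :
    ∑ i ∈ Finset.range n, r ^ i ≤ 1 / (1 - r) := by
  have hne : r ≠ 1 := ne_of_lt h1
  rw [geom_sum_eq hne]
  have h2 : (r ^ n - 1) / (r - 1) = (1 - r ^ n) / (1 - r) := by
    rw [← neg_div_neg_eq]; ring_nf
  rw [h2]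
  gcongr
  · nlinarith [pow_nonneg h0 n]

private lemma my_kernel {s : ℝ} (hs : 0 ≤ s) : s / (1 + s) ≤ 1 - Real.exp (-s) := by
  have h := Real.add_one_le_exp s
  have hs1 : (0:ℝ) < 1 + s := by linarith
  have h1 : (Real.exp s)⁻¹ ≤ (1 + s)⁻¹ := by
    apply inv_anti₀ hs1; linarith
  have h2 : 1 - (1 + s)⁻¹ = s / (1 + s) := by field_simp; ring
  rw [Real.exp_neg]
  linarith

private lemma my_step (T D p : ℝ) (hp : 1 < p) (hD : 0 < D) (f : ℝ → ℝ)
    (h1 : ∀ y ∈ Set.Ico (1:ℝ) T, 0 ≤ f y)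
    (h2 : ∀ y ∈ Set.Ico (1:ℝ) T, IntervalIntegrable
      (fun η => (1 - η / y) * f η ^ p / η) volume 1 y)
    (h3 : ∀ y ∈ Set.Ico (1:ℝ) T,
      D * ∫ η in (1:ℝ)..y, (1 - η / y) * f η ^ p / η ≤ f y)
    (m w δ : ℝ) (hm : 0 < m) (hw : 1 ≤ w) (hδ : 0 < δ)
    (hcond : 4 * (2 + δ) ≤ D * m ^ (p - 1) * (δ * δ))
    (hlow : ∀ y, w ≤ y → y < T → m ≤ f y) :
    ∀ y, w * Real.exp δ ≤ y → y < T → 2 * m ≤ f y := by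
  intro y hy hyT
  have hwpos : 0 < w := lt_of_lt_of_le one_pos hw
  have hexpδ : 1 ≤ Real.exp δ := Real.one_le_exp hδ.le
  have hy1 : 1 ≤ y := by nlinarith
  have hypos : 0 < y := lt_of_lt_of_le one_pos hy1
  set a := y * Real.exp (-δ) with ha
  set b := y * Real.exp (-(δ/2)) with hb
  have hapos : 0 < a := by positivity
  have hbpos : 0 < b := by positivity
  have hwa : w ≤ a := by
    have h' : w * Real.exp δ * Real.exp (-δ) ≤ y * Real.exp (-δ) :=
      mul_le_mul_of_nonneg_right hy (Real.exp_pos _).le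
    rwa [mul_assoc, ← Real.exp_add, add_neg_cancel, Real.exp_zero, mul_one] at h'
  have h1a : 1 ≤ a := hw.trans hwa
  have hab : a ≤ b := by
    apply mul_le_mul_of_nonneg_left _ hypos.le
    exact Real.exp_le_exp.mpr (by linarith)
  have hby : b ≤ y := by
    have h' : Real.exp (-(δ/2)) ≤ 1 := Real.exp_le_one_iff.mpr (by linarith)
    nlinarith
  have h1b : 1 ≤ b := h1a.trans hab
  have hIpos : ∀ η ∈ Set.Icc (1:ℝ) y, 0 ≤ (1 - η / y) * f η ^ p / η := by
    intro η hη
    have hf : 0 ≤ f η := h1 η ⟨hη.1, lt_of_le_of_lt hη.2 hyT⟩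
    have hker : 0 ≤ 1 - η / y := by
      rw [sub_nonneg, div_le_one hypos]; exact hη.2
    have hηpos : (0:ℝ) < η := lt_of_lt_of_le one_pos hη.1
    exact div_nonneg (mul_nonneg hker (Real.rpow_nonneg hf p)) hηpos.le
  have hI := h2 y ⟨hy1, hyT⟩
  have hmem : ∀ x : ℝ, 1 ≤ x → x ≤ y → x ∈ Set.uIcc (1:ℝ) y := by
    intro x hx hxy; rw [Set.uIcc_of_le hy1]; exact ⟨hx, hxy⟩
  have hIa : IntervalIntegrable (fun η => (1 - η / y) * f η ^ p / η) volume 1 a :=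
    hI.mono_set (Set.uIcc_subset_uIcc (hmem 1 le_rfl hy1) (hmem a h1a (hab.trans hby)))
  have hIay : IntervalIntegrable (fun η => (1 - η / y) * f η ^ p / η) volume a y :=
    hI.mono_set (Set.uIcc_subset_uIcc (hmem a h1a (hab.trans hby)) (hmem y hy1 le_rfl))
  have hIab : IntervalIntegrable (fun η => (1 - η / y) * f η ^ p / η) volume a b :=
    hI.mono_set (Set.uIcc_subset_uIcc (hmem a h1a (hab.trans hby)) (hmem b h1b hby))
  have hIby : IntervalIntegrable (fun η => (1 - η / y) * f η ^ p / η) volume b y :=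
    hI.mono_set (Set.uIcc_subset_uIcc (hmem b h1b hby) (hmem y hy1 le_rfl))
  -- splitting
  have hsplit1 : (∫ η in (1:ℝ)..a, (1 - η / y) * f η ^ p / η)
      + (∫ η in a..y, (1 - η / y) * f η ^ p / η)
      = ∫ η in (1:ℝ)..y, (1 - η / y) * f η ^ p / η :=
    integral_add_adjacent_intervals hIa hIay
  have hsplit2 : (∫ η in a..b, (1 - η / y) * f η ^ p / η)
      + (∫ η in b..y, (1 - η / y) * f η ^ p / η)
      = ∫ η in a..y, (1 - η / y) * f η ^ p / η :=
    integral_add_adjacent_intervals hIab hIby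
  have hnn1 : 0 ≤ ∫ η in (1:ℝ)..a, (1 - η / y) * f η ^ p / η := by
    apply integral_nonneg h1a
    intro u hu; exact hIpos u ⟨hu.1, hu.2.trans (hab.trans hby)⟩
  have hnn2 : 0 ≤ ∫ η in b..y, (1 - η / y) * f η ^ p / η := by
    apply integral_nonneg hby
    intro u hu; exact hIpos u ⟨h1b.trans hu.1, hu.2⟩
  -- pointwise lower bound on [a,b]
  have hkernel : δ / (2 + δ) ≤ 1 - Real.exp (-(δ/2)) := by
    have h' := my_kernel (s := δ/2) (by linarith)
    have h'' : δ / 2 / (1 + δ / 2) = δ / (2 + δ) := by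
      rw [div_div]; congr 1; ring
    rwa [h''] at h'
  set c := δ / (2 + δ) * m ^ p with hc
  have hptw : ∀ η ∈ Set.Icc a b, c * η⁻¹ ≤ (1 - η / y) * f η ^ p / η := by
    intro η hη
    have hηpos : (0:ℝ) < η := lt_of_lt_of_le hapos hη.1
    have hfη : m ≤ f η :=
      hlow η (hwa.trans hη.1) (lt_of_le_of_lt (hη.2.trans hby) hyT)
    have hfp : m ^ p ≤ f η ^ p := Real.rpow_le_rpow hm.le hfη (by linarith)
    have hηb : η / y ≤ Real.exp (-(δ/2)) := by
      rw [div_le_iff₀ hypos]; rw [hb] at hη; linarith [hη.2]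
    have hker2 : δ / (2 + δ) ≤ 1 - η / y := by linarith
    rw [div_eq_mul_inv]
    apply mul_le_mul_of_nonneg_right _ (inv_nonneg.mpr hηpos.le)
    have hfrac : (0:ℝ) ≤ δ / (2 + δ) := div_nonneg hδ.le (by linarith)
    apply mul_le_mul hker2 hfp (Real.rpow_nonneg hm.le p) (by linarith)
  have hgint : IntervalIntegrable (fun η => c * η⁻¹) volume a b := by
    apply ContinuousOn.intervalIntegrable
    apply ContinuousOn.mul continuousOn_const
    apply ContinuousOn.inv₀ continuousOn_id
    intro x hx
    rw [Set.uIcc_of_le hab] at hx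
    exact ne_of_gt (lt_of_lt_of_le hapos hx.1)
  have hmono : (∫ η in a..b, c * η⁻¹) ≤ ∫ η in a..b, (1 - η / y) * f η ^ p / η :=
    integral_mono_on hab hgint hIab hptw
  have hcomp : (∫ η in a..b, c * η⁻¹) = c * (δ / 2) := by
    rw [intervalIntegral.integral_const_mul, integral_inv_of_pos hapos hbpos]
    congr 1
    have hba : b / a = Real.exp (δ / 2) := by
      rw [ha, hb, mul_div_mul_left _ _ hypos.ne', ← Real.exp_sub]
      ring_nf
    rw [hba, Real.log_exp]
  -- assemble
  have hchain : c * (δ / 2) ≤ ∫ η in (1:ℝ)..y, (1 - η / y) * f η ^ p / η := by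
    rw [← hsplit1, ← hsplit2, ← hcomp]
    linarith
  have hfy := h3 y ⟨hy1, hyT⟩
  have hstep : 2 * m ≤ D * (c * (δ / 2)) := by
    have hmp : m ^ p = m ^ (p - 1) * m := by
      rw [show p = (p-1) + 1 by ring, Real.rpow_add hm, Real.rpow_one]
      ring_nf
    have h2δ : (0:ℝ) < 2 + δ := by linarith
    rw [hc, hmp, show D * (δ / (2 + δ) * (m ^ (p-1) * m) * (δ / 2))
        = D * m ^ (p-1) * (δ * δ) * m / ((2 + δ) * 2) from by field_simp,
      le_div_iff₀ (by positivity)]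
    nlinarith [mul_le_mul_of_nonneg_right hcond hm.le]
  calc 2 * m ≤ D * (c * (δ / 2)) := hstep
    _ ≤ D * ∫ η in (1:ℝ)..y, (1 - η / y) * f η ^ p / η := by
        apply mul_le_mul_of_nonneg_left hchain hD.le
    _ ≤ f y := hfy


/-- Lemma A.1, case κ = 1: if f satisfies f(y) ≥ C₁ε^α and
f(y) ≥ C₂ε^β ∫₁^y (1 − η/y) f(η)ᵖ/η dη on [1,T), then f cannot exist on [1,T)
for T beyond exp(C* ε^{−((p−1)α+β)}); i.e. the lifespan is at most
exp(C* ε^{−((p−1)α+β)}). -/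
theorem stmt18 (C₁ C₂ α β p : ℝ) (hC₁ : 0 < C₁) (hC₂ : 0 < C₂)
    (hα : 0 ≤ α) (hβ : 0 ≤ β) (hp : 1 < p) :
    ∃ Cstar : ℝ, 0 < Cstar ∧
      ∀ ε : ℝ, 0 < ε → ε ≤ 1 →
        ∀ T : ℝ, Real.exp (Cstar * ε ^ (-((p - 1) * α + β))) < T →
          ¬ ∃ f : ℝ → ℝ,
            (∀ y ∈ Set.Ico (1:ℝ) T, C₁ * ε ^ α ≤ f y) ∧
            (∀ y ∈ Set.Ico (1:ℝ) T, IntervalIntegrable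
              (fun η => (1 - η / y) * f η ^ p / η) MeasureTheory.volume 1 y) ∧
            (∀ y ∈ Set.Ico (1:ℝ) T,
              C₂ * ε ^ β * ∫ η in (1:ℝ)..y, (1 - η / y) * f η ^ p / η ≤ f y) := by
  have hp0 : (0:ℝ) < p - 1 := by linarith
  set K := C₂ * C₁ ^ (p - 1) with hK
  have hKpos : 0 < K := mul_pos hC₂ (Real.rpow_pos_of_pos hC₁ _)
  set q := (2:ℝ) ^ (1 - p) with hqdef
  have hq0 : 0 < q := Real.rpow_pos_of_pos two_pos _
  have hq1 : q < 1 := Real.rpow_lt_one_of_one_lt_of_neg one_lt_two (by linarith)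
  have hsq0 : 0 ≤ Real.sqrt q := Real.sqrt_nonneg q
  have hsq1 : Real.sqrt q < 1 := by
    rw [show (1:ℝ) = Real.sqrt 1 from (Real.sqrt_one).symm]
    exact Real.sqrt_lt_sqrt hq0.le hq1
  set Cst : ℝ := 4 / K / (1 - q) + Real.sqrt (32 / K) / (1 - Real.sqrt q) with hCst
  refine ⟨Cst, ?_, ?_⟩
  · apply add_pos_of_pos_of_nonneg
    · exact div_pos (by positivity) (by linarith)
    · exact div_nonneg (Real.sqrt_nonneg _) (by linarith)
  intro ε hε hε1 T hT ⟨f, h1, h2, h3⟩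
  set E := ε ^ (-((p - 1) * α + β)) with hE
  have hEpos : 0 < E := Real.rpow_pos_of_pos hε _
  have hμ : 0 ≤ (p - 1) * α + β := by positivity
  have hE1 : 1 ≤ E := by
    rw [hE, Real.rpow_neg hε.le, le_inv_comm₀ one_pos]
    · rw [inv_one]
      exact Real.rpow_le_one hε.le hε1 hμ
    · exact Real.rpow_pos_of_pos hε _
  set M := C₁ * ε ^ α with hM
  have hMpos : 0 < M := mul_pos hC₁ (Real.rpow_pos_of_pos hε α)
  set D := C₂ * ε ^ β with hD
  have hDpos : 0 < D := mul_pos hC₂ (Real.rpow_pos_of_pos hε β)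
  have hDM : D * M ^ (p - 1) = K * ε ^ ((p - 1) * α + β) := by
    rw [hM, hD, hK, Real.mul_rpow hC₁.le (Real.rpow_nonneg hε.le α),
      ← Real.rpow_mul hε.le,
      show (p - 1) * α + β = β + α * (p - 1) from by ring, Real.rpow_add hε]
    ring
  set t₀ : ℝ := 4 / K * E with ht₀
  have ht₀pos : 0 < t₀ := by positivity
  have hDMt : D * M ^ (p - 1) * t₀ = 4 := by
    rw [hDM, ht₀, hE]
    rw [show K * ε ^ ((p-1)*α+β) * (4 / K * ε ^ (-((p-1)*α+β)))
        = 4 * (K / K) * (ε ^ ((p-1)*α+β) * ε ^ (-((p-1)*α+β))) from by ring,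
      div_self hKpos.ne', ← Real.rpow_add hε,
      show (p-1)*α+β + -((p-1)*α+β) = 0 from by ring, Real.rpow_zero]
    norm_num
  set δf : ℕ → ℝ := fun j => t₀ * q ^ j + Real.sqrt (8 * (t₀ * q ^ j)) with hδf
  have hδfj : ∀ j : ℕ, δf j = t₀ * q ^ j + Real.sqrt (8 * (t₀ * q ^ j)) := by
    intro j; simp only [hδf]
  have hδfpos : ∀ j, 0 < δf j := by
    intro j
    rw [hδfj]
    have h' : 0 < t₀ * q ^ j := by positivity
    exact add_pos_of_pos_of_nonneg h' (Real.sqrt_nonneg _)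
  set wf : ℕ → ℝ := fun j => Real.exp (∑ i ∈ Finset.range j, δf i) with hwf
  have hwfj : ∀ j : ℕ, wf j = Real.exp (∑ i ∈ Finset.range j, δf i) := by
    intro j; simp only [hwf]
  have hwf1 : ∀ j, 1 ≤ wf j := by
    intro j
    rw [hwfj]
    exact Real.one_le_exp (Finset.sum_nonneg fun i _ => (hδfpos i).le)
  have h1' : ∀ y ∈ Set.Ico (1:ℝ) T, 0 ≤ f y := fun y hy => le_trans hMpos.le (h1 y hy)
  have main : ∀ j : ℕ, ∀ y, wf j ≤ y → y < T → 2 ^ j * M ≤ f y := by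
    intro j
    induction j with
    | zero =>
      intro y hy hyT
      have h0 : wf 0 = 1 := by rw [hwfj]; simp
      rw [h0] at hy
      simpa using h1 y ⟨hy, hyT⟩
    | succ j ih =>
      have hmj : 0 < (2:ℝ) ^ j * M := by positivity
      have htj : 0 < t₀ * q ^ j := by positivity
      have e2 : ((2:ℝ) ^ j) ^ (p - 1) * q ^ j = 1 := by
        rw [hqdef, ← Real.rpow_natCast (2:ℝ) j, ← Real.rpow_natCast ((2:ℝ) ^ (1 - p)) j,
          ← Real.rpow_mul (by norm_num : (0:ℝ) ≤ 2), ← Real.rpow_mul (by norm_num : (0:ℝ) ≤ 2),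
          ← Real.rpow_add (by norm_num : (0:ℝ) < 2),
          show (j:ℝ) * (p - 1) + (1 - p) * (j:ℝ) = 0 from by ring, Real.rpow_zero]
      have hκt : D * ((2:ℝ) ^ j * M) ^ (p - 1) * (t₀ * q ^ j) = 4 := by
        rw [Real.mul_rpow (by positivity) hMpos.le,
          show D * (((2:ℝ)^j)^(p-1) * M^(p-1)) * (t₀ * q ^ j)
            = (D * M^(p-1) * t₀) * (((2:ℝ)^j)^(p-1) * q ^ j) from by ring, hDMt, e2]
        norm_num
      have hs2 : Real.sqrt (8 * (t₀ * q ^ j)) ^ 2 = 8 * (t₀ * q ^ j) :=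
        Real.sq_sqrt (by positivity)
      have hs0 : 0 ≤ Real.sqrt (8 * (t₀ * q ^ j)) := Real.sqrt_nonneg _
      have hcond : 4 * (2 + δf j) ≤ D * ((2:ℝ)^j * M) ^ (p - 1) * (δf j * δf j) := by
        have hκ : D * ((2:ℝ)^j * M) ^ (p - 1) = 4 / (t₀ * q ^ j) := by
          rw [eq_div_iff htj.ne']; exact hκt
        rw [hκ, hδfj, div_mul_eq_mul_div, le_div_iff₀ htj]
        nlinarith [mul_nonneg hs0 htj.le, hs2, hs0, htj]
      have hstep := my_step T D p hp hDpos f h1' h2 h3 ((2:ℝ)^j * M) (wf j) (δf j)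
        hmj (hwf1 j) (hδfpos j) hcond ih
      intro y hy hyT
      have hwsucc : wf (j+1) = wf j * Real.exp (δf j) := by
        rw [hwfj, hwfj, Finset.sum_range_succ, Real.exp_add]
      rw [hwsucc] at hy
      have h2m := hstep y hy hyT
      calc (2:ℝ) ^ (j+1) * M = 2 * ((2:ℝ)^j * M) := by ring
        _ ≤ f y := h2m
  have hsE : Real.sqrt E ≤ E := by
    calc Real.sqrt E ≤ Real.sqrt (E^2) := Real.sqrt_le_sqrt (by nlinarith)
      _ = E := Real.sqrt_sq hEpos.le
  have hsum : ∀ j : ℕ, ∑ i ∈ Finset.range j, δf i ≤ Cst * E := by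
    intro j
    have hterm : ∀ i : ℕ, δf i = t₀ * q ^ i + Real.sqrt (8 * t₀) * Real.sqrt q ^ i := by
      intro i
      rw [hδfj, show 8 * (t₀ * q ^ i) = 8 * t₀ * q ^ i from by ring,
        Real.sqrt_mul (by positivity), my_sqrt_pow hq0.le]
    have hq' : (0:ℝ) < 1 - q := by linarith
    have hsq' : (0:ℝ) < 1 - Real.sqrt q := by linarith
    have h2nd : Real.sqrt (8 * t₀) ≤ Real.sqrt (32 / K) * E := by
      rw [show (8:ℝ) * t₀ = 32 / K * E from by rw [ht₀]; ring,
        Real.sqrt_mul (by positivity)]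
      exact mul_le_mul_of_nonneg_left hsE (Real.sqrt_nonneg _)
    calc ∑ i ∈ Finset.range j, δf i
        = t₀ * (∑ i ∈ Finset.range j, q ^ i)
          + Real.sqrt (8 * t₀) * ∑ i ∈ Finset.range j, Real.sqrt q ^ i := by
          rw [Finset.mul_sum, Finset.mul_sum, ← Finset.sum_add_distrib]
          exact Finset.sum_congr rfl fun i _ => hterm i
      _ ≤ t₀ * (1 / (1 - q)) + Real.sqrt (8 * t₀) * (1 / (1 - Real.sqrt q)) := by
          apply add_le_add
          · exact mul_le_mul_of_nonneg_left (my_geom_bound hq0.le hq1 j) ht₀pos.le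
          · exact mul_le_mul_of_nonneg_left (my_geom_bound hsq0 hsq1 j) (Real.sqrt_nonneg _)
      _ ≤ (4 / K * E) * (1 / (1 - q))
          + (Real.sqrt (32 / K) * E) * (1 / (1 - Real.sqrt q)) := by
          apply add_le_add
          · rw [ht₀]
          · exact mul_le_mul_of_nonneg_right h2nd (one_div_nonneg.mpr hsq'.le)
      _ = Cst * E := by rw [hCst]; ring
  have hbd : ∀ j : ℕ, (2:ℝ)^j * M ≤ f (Real.exp (Cst * E)) := by
    intro j
    exact main j _ (by rw [hwfj]; exact Real.exp_le_exp.mpr (hsum j)) hT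
  obtain ⟨n, hn⟩ := pow_unbounded_of_one_lt (f (Real.exp (Cst * E)) / M)
    (one_lt_two : (1:ℝ) < 2)
  rw [div_lt_iff₀ hMpos] at hn
  linarith [hbd n]
end
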